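/- arXiv:2401.10930 — 9 statements merged into one kernel-verified Lean document; each statement's English description precedes it below -/
import Mathlib

section
/- Let p ≥ 137 be a prime with p ≡ 5 (mod 8) such that p + x² has at most two distinct prime factors for every odd integer x with x² < p. Then for every odd positive integer x with x² < p, the number p + x² is twice a prime. -/
private lemma odd_sq_mod_eight {y : ℕ} (hy : Odd y) : y ^ 2 % 8 = 1 := by
  obtain ⟨t, rfl⟩ := hy
  have h : (2 * t + 1) ^ 2 = 4 * (t * (t + 1)) + 1 := by ring
  obtain ⟨r, hr⟩ := Nat.even_mul_succ_self t
  omega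

private lemma pow_mod_four_one {a : ℕ} (h : a % 4 = 1) (k : ℕ) : a ^ k % 4 = 1 := by
  simp [Nat.pow_mod, h]

/-- Key lemma: for every odd `y` with `y² < p`, `p + y²` is twice an odd prime power
with odd exponent. -/
private lemma key (p : ℕ) (hp : p.Prime) (h137 : 137 ≤ p) (hmod : p % 8 = 5)
    (hω : ∀ x : ℕ, Odd x → x ^ 2 < p → (p + x ^ 2).primeFactors.card ≤ 2)
    (y : ℕ) (hy : Odd y) (hy2 : y ^ 2 < p) :
    ∃ q k : ℕ, q.Prime ∧ q % 2 = 1 ∧ 0 < k ∧ k % 2 = 1 ∧ p + y ^ 2 = 2 * q ^ k := by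
  have h8 : (p + y ^ 2) % 8 = 6 := by
    have := odd_sq_mod_eight hy
    omega
  set N := p + y ^ 2 with hN
  obtain ⟨m, hm, hm4⟩ : ∃ m, N = 2 * m ∧ m % 4 = 3 := ⟨N / 2, by omega, by omega⟩
  have hm1 : 1 < m := by omega
  have hNne : N ≠ 0 := by omega
  have h2N : 2 ∈ N.primeFactors := by
    rw [Nat.mem_primeFactors]
    exact ⟨Nat.prime_two, ⟨m, hm⟩, hNne⟩
  have hsub : m.primeFactors ⊆ N.primeFactors \ {2} := by
    intro r hr
    rw [Finset.mem_sdiff, Finset.mem_singleton]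
    constructor
    · exact Nat.primeFactors_mono ⟨2, by omega⟩ hNne hr
    · rintro rfl
      have := Nat.dvd_of_mem_primeFactors hr
      omega
  have hcard : m.primeFactors.card = 1 := by
    have h1 : 1 ≤ m.primeFactors.card :=
      Finset.Nonempty.card_pos (Nat.nonempty_primeFactors.mpr hm1)
    have h2 : m.primeFactors.card ≤ (N.primeFactors \ {2}).card :=
      Finset.card_le_card hsub
    have h3 : (N.primeFactors \ {2}).card = N.primeFactors.card - 1 := by
      rw [Finset.card_sdiff_of_subset (by simpa using h2N), Finset.card_singleton]
    have h4 : N.primeFactors.card ≤ 2 := hω y hy hy2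
    omega
  obtain ⟨q, k, hq', hk, hqk⟩ := isPrimePow_iff_card_primeFactors_eq_one.mpr hcard
  have hq : q.Prime := Nat.prime_iff.mpr hq'
  have hqdvd : q ∣ m := hqk ▸ dvd_pow_self q (by omega)
  have hqodd : q % 2 = 1 := by
    by_contra h
    have h2m : 2 ∣ m := dvd_trans (⟨q / 2, by omega⟩ : (2:ℕ) ∣ q) hqdvd
    omega
  have hq4 : q % 4 = 3 := by
    by_contra h
    have hq1 : q % 4 = 1 := by omega
    have := pow_mod_four_one hq1 k
    omega
  have hkodd : k % 2 = 1 := by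
    by_contra h
    obtain ⟨t, rfl⟩ : ∃ t, k = 2 * t := ⟨k / 2, by omega⟩
    have hsq : q ^ 2 % 4 = 1 := by
      rw [Nat.pow_mod, hq4]
    have : (q ^ 2) ^ t % 4 = 1 := pow_mod_four_one hsq t
    rw [← pow_mul] at this
    omega
  exact ⟨q, k, hq, hqodd, by omega, hkodd, by omega⟩

private lemma final_contra {q a b p : ℕ} (hq : q.Prime) (hq3 : 3 ≤ q) (hab : a ≤ b)
    (hda : q ^ 3 ∣ p + a ^ 2) (hdb : q ^ 3 ∣ p + b ^ 2) (ha : 0 < a) (hb : b < 2 * q)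
    (hnd : ¬ q ∣ b - a) (hqd : q ∣ a + b) : False := by
  have hab2 : a ^ 2 ≤ b ^ 2 := Nat.pow_le_pow_left hab 2
  have hdiff : q ^ 3 ∣ b ^ 2 - a ^ 2 := by
    have := Nat.dvd_sub hdb hda
    have heq : p + b ^ 2 - (p + a ^ 2) = b ^ 2 - a ^ 2 := by omega
    rwa [heq] at this
  rw [sq_tsub_sq] at hdiff
  have hcop : Nat.Coprime (q ^ 3) (b - a) :=
    Nat.Coprime.pow_left 3 ((Nat.Prime.coprime_iff_not_dvd hq).mpr hnd)
  have hdsum : q ^ 3 ∣ b + a := hcop.dvd_of_dvd_mul_right hdiff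
  have hle : q ^ 3 ≤ b + a := Nat.le_of_dvd (by omega) hdsum
  have h9 : 9 * q ≤ q ^ 3 := by
    have h99 : 9 ≤ q * q := Nat.mul_le_mul hq3 hq3
    calc 9 * q ≤ (q * q) * q := Nat.mul_le_mul h99 le_rfl
    _ = q ^ 3 := by ring
  omega

theorem stmt_0 (p : ℕ) (hp : p.Prime) (h137 : 137 ≤ p) (hmod : p % 8 = 5)
    (hω : ∀ x : ℕ, Odd x → x ^ 2 < p → (p + x ^ 2).primeFactors.card ≤ 2) :
    ∀ x : ℕ, Odd x → 0 < x → x ^ 2 < p → ∃ q : ℕ, q.Prime ∧ p + x ^ 2 = 2 * q := by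
  intro x hox hxpos hx2
  obtain ⟨q, k, hq, hqodd, hkpos, hkodd, hEq⟩ := key p hp h137 hmod hω x hox hx2
  rcases eq_or_ne k 1 with rfl | hk1
  · exact ⟨q, hq, by simpa using hEq⟩
  exfalso
  have hk3 : 3 ≤ k := by omega
  have hq2 : 2 ≤ q := hq.two_le
  have hq3 : 3 ≤ q := by omega
  have hqkp : q ^ k < p := by omega
  have hq3k : q ^ 3 ≤ q ^ k := Nat.pow_le_pow_right (by omega) hk3
  have hq3p : q ^ 3 < p := lt_of_le_of_lt hq3k hqkp
  have hqN : q ∣ p + x ^ 2 := hEq ▸ Dvd.dvd.mul_left (dvd_pow_self q (by omega)) 2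
  have hqx : ¬ q ∣ x := by
    intro hdx
    have hx2d : q ∣ x ^ 2 := dvd_pow hdx two_ne_zero
    have hqp : q ∣ p := (Nat.dvd_add_right hx2d).mp (by rwa [add_comm] at hqN)
    have : q = p := (Nat.prime_dvd_prime_iff_eq hq hp).mp hqp
    have : q ≤ q ^ 3 := Nat.le_self_pow (by omega) q
    omega
  haveI : Fact q.Prime := ⟨hq⟩
  -- the residue of x mod q and the two odd representatives
  set r := x % q with hrdef
  have hr0 : r ≠ 0 := fun h => hqx (Nat.dvd_of_mod_eq_zero h)
  have hrq : r < q := Nat.mod_lt x (by omega)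
  set y₁ := if r % 2 = 1 then r else r + q with hy₁def
  set y₂ := if (q - r) % 2 = 1 then q - r else q - r + q with hy₂def
  have o₁ : y₁ % 2 = 1 := by rw [hy₁def]; split_ifs with h <;> omega
  have o₂ : y₂ % 2 = 1 := by rw [hy₂def]; split_ifs with h <;> omega
  have b₁ : 0 < y₁ ∧ y₁ < 2 * q := by rw [hy₁def]; split_ifs with h <;> omega
  have b₂ : 0 < y₂ ∧ y₂ < 2 * q := by rw [hy₂def]; split_ifs with h <;> omega
  have m₁ : y₁ % q = r := by
    rw [hy₁def]; split_ifs with h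
    · exact Nat.mod_eq_of_lt hrq
    · rw [Nat.add_mod_right]; exact Nat.mod_eq_of_lt hrq
  have m₂ : y₂ % q = q - r := by
    rw [hy₂def]; split_ifs with h
    · exact Nat.mod_eq_of_lt (by omega)
    · rw [Nat.add_mod_right]; exact Nat.mod_eq_of_lt (by omega)
  have c₁ : (y₁ : ZMod q) = (x : ZMod q) := by
    rw [ZMod.natCast_eq_natCast_iff']
    rw [m₁, ← hrdef]
  have hqy₂x : q ∣ y₂ + x := by
    have : (y₂ + x) % q = 0 := by
      rw [Nat.add_mod, m₂, ← hrdef, Nat.sub_add_cancel (le_of_lt hrq), Nat.mod_self]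
    exact Nat.dvd_of_mod_eq_zero this
  have c₂ : (y₂ : ZMod q) = -(x : ZMod q) := by
    have := (ZMod.natCast_eq_zero_iff (y₂ + x) q).mpr hqy₂x
    push_cast at this
    linear_combination this
  -- 4q² ≤ p
  have h4q : 4 * q ^ 2 ≤ p := by
    rcases Nat.lt_or_ge q 5 with h5 | h5
    · have : q = 3 := by omega
      subst this
      omega
    · have : 4 * q ^ 2 ≤ q ^ 3 := by
        calc 4 * q ^ 2 ≤ q * q ^ 2 := Nat.mul_le_mul (by omega) le_rfl
        _ = q ^ 3 := by ring
      omega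
  -- main step: any good odd residue gives divisibility by q³
  have step : ∀ y : ℕ, y % 2 = 1 → 0 < y → y < 2 * q →
      (y : ZMod q) ^ 2 = (x : ZMod q) ^ 2 → q ^ 3 ∣ p + y ^ 2 := by
    intro y ho hy0 hylt hsq
    have hy2p : y ^ 2 < p := by nlinarith
    obtain ⟨q', j, hq', _, hjpos, _, hE⟩ := key p hp h137 hmod hω y (Nat.odd_iff.mpr ho) hy2p
    have hqdvdN : q ∣ p + y ^ 2 := by
      have h0 : ((p + x ^ 2 : ℕ) : ZMod q) = 0 :=
        (ZMod.natCast_eq_zero_iff _ _).mpr hqN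
      have h1 : ((p + y ^ 2 : ℕ) : ZMod q) = 0 := by
        push_cast at h0 ⊢
        rw [hsq]
        linear_combination h0
      exact (ZMod.natCast_eq_zero_iff _ _).mp h1
    have hqq' : q = q' := by
      have h1 : q ∣ 2 * q' ^ j := hE ▸ hqdvdN
      rcases (Nat.Prime.dvd_mul hq).mp h1 with h | h
      · have := Nat.le_of_dvd (by norm_num) h
        omega
      · exact (Nat.prime_dvd_prime_iff_eq hq hq').mp (hq.dvd_of_dvd_pow h)
    subst hqq'
    have hj3 : 3 ≤ j := by
      by_contra hc
      push_neg at hc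
      have hle2 : q ^ j ≤ q ^ 2 := Nat.pow_le_pow_right (by omega) (by omega)
      have h23 : 2 * q ^ 2 < q ^ 3 := by
        have hq2pos : 0 < q ^ 2 := by positivity
        calc 2 * q ^ 2 < 3 * q ^ 2 := by omega
        _ ≤ q * q ^ 2 := Nat.mul_le_mul hq3 le_rfl
        _ = q ^ 3 := by ring
      omega
    exact hE ▸ Dvd.dvd.mul_left (pow_dvd_pow q hj3) 2
  have d₁ : q ^ 3 ∣ p + y₁ ^ 2 := step y₁ o₁ b₁.1 b₁.2 (by rw [c₁])
  have d₂ : q ^ 3 ∣ p + y₂ ^ 2 := step y₂ o₂ b₂.1 b₂.2 (by rw [c₂]; ring)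
  have hsum : q ∣ y₁ + y₂ := by
    have h1 : ((y₁ + y₂ : ℕ) : ZMod q) = 0 := by
      push_cast
      rw [c₁, c₂]
      ring
    exact (ZMod.natCast_eq_zero_iff _ _).mp h1
  have h2x : ¬ q ∣ 2 * x := by
    intro h
    rcases (Nat.Prime.dvd_mul hq).mp h with h | h
    · have := Nat.le_of_dvd (by norm_num) h
      omega
    · exact hqx h
  rcases le_total y₁ y₂ with hle | hle
  · refine final_contra hq hq3 hle d₁ d₂ b₁.1 b₂.2 ?_ hsum
    intro hd
    have h1 : ((y₂ - y₁ : ℕ) : ZMod q) = 0 := (ZMod.natCast_eq_zero_iff _ _).mpr hd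
    rw [Nat.cast_sub hle, c₁, c₂] at h1
    apply h2x
    apply (ZMod.natCast_eq_zero_iff _ _).mp
    push_cast
    linear_combination -h1
  · refine final_contra hq hq3 hle d₂ d₁ b₂.1 b₁.2 ?_ (by rwa [add_comm] at hsum)
    intro hd
    have h1 : ((y₁ - y₂ : ℕ) : ZMod q) = 0 := (ZMod.natCast_eq_zero_iff _ _).mpr hd
    rw [Nat.cast_sub hle, c₁, c₂] at h1
    apply h2x
    apply (ZMod.natCast_eq_zero_iff _ _).mp
    push_cast
    linear_combination h1
end

section
/- Let p ≥ 19 be a prime with p ≡ 3 (mod 8) such that p + x² has at most two distinct prime factors for every odd integer x with x² < p. Then for every odd prime q < √p, −p is a quadratic non-residue modulo q. -/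
lemma aux_pow (p q : ℕ) (h19 : 19 ≤ p) (hmod : p % 8 = 3)
    (hω : ∀ x : ℕ, Odd x → x ^ 2 < p → (p + x ^ 2).primeFactors.card ≤ 2)
    (hq : q.Prime) (hqo : Odd q) (x : ℕ) (hx : Odd x) (hxp : x ^ 2 < p)
    (hdvd : q ∣ p + x ^ 2) : ∃ b, p + x ^ 2 = 4 * q ^ b := by
  obtain ⟨k, hk⟩ := hx
  have hx2 : x ^ 2 = 4 * (k * (k + 1)) + 1 := by subst hk; ring
  obtain ⟨j, hj⟩ := Nat.even_mul_succ_self k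
  have h8 : (p + x ^ 2) % 8 = 4 := by omega
  obtain ⟨m, hm, hmodd⟩ : ∃ m, p + x ^ 2 = 4 * m ∧ m % 2 = 1 :=
    ⟨(p + x ^ 2) / 4, by omega, by omega⟩
  have hq2 : q ≠ 2 := by rintro rfl; exact (by norm_num : ¬ Odd 2) hqo
  have hq4 : Nat.Coprime q 4 := by
    have := (hqo.coprime_two_right).pow_right 2
    norm_num at this; exact this
  have hqm : q ∣ m := hq4.dvd_of_dvd_mul_left (by rw [← hm]; exact hdvd)
  have hNne : p + x ^ 2 ≠ 0 := by omega
  have huniq : ∀ {d : ℕ}, d.Prime → d ∣ m → d = q := by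
    intro r hr hrm
    by_contra hrq
    have hr2 : r ≠ 2 := by
      rintro rfl
      obtain ⟨c, hc⟩ := hrm; omega
    have hsub : ({2, q, r} : Finset ℕ) ⊆ (p + x ^ 2).primeFactors := by
      intro a ha
      simp only [Finset.mem_insert, Finset.mem_singleton] at ha
      rcases ha with rfl | rfl | rfl
      · exact Nat.mem_primeFactors.mpr ⟨Nat.prime_two, ⟨2 * m, by omega⟩, hNne⟩
      · exact Nat.mem_primeFactors.mpr ⟨hq, hdvd, hNne⟩
      · exact Nat.mem_primeFactors.mpr ⟨hr, hrm.trans ⟨4, by omega⟩, hNne⟩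
    have hcard : ({2, q, r} : Finset ℕ).card = 3 := by
      rw [Finset.card_insert_of_notMem, Finset.card_insert_of_notMem,
        Finset.card_singleton]
      · simp only [Finset.mem_singleton]; exact fun h => hrq h.symm
      · simp only [Finset.mem_insert, Finset.mem_singleton]; push_neg
        exact ⟨fun h => hq2 h.symm, fun h => hr2 h.symm⟩
    have h1 := Finset.card_le_card hsub
    have h2 := hω x ⟨k, hk⟩ hxp
    omega
  have hmne : m ≠ 0 := by omega
  have := Nat.eq_prime_pow_of_unique_prime_dvd hmne huniq
  exact ⟨m.primeFactorsList.length, by omega⟩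

theorem stmt_2 (p : ℕ) (hp : p.Prime) (h19 : 19 ≤ p) (hmod : p % 8 = 3)
    (hω : ∀ x : ℕ, Odd x → x ^ 2 < p → (p + x ^ 2).primeFactors.card ≤ 2) :
    ∀ q : ℕ, q.Prime → Odd q → (q : ℝ) < Real.sqrt p →
      ¬ IsSquare (-(p : ZMod q)) := by
  intro q hq hqo hqlt hsq
  haveI : Fact q.Prime := ⟨hq⟩
  have hqne2 : q ≠ 2 := by rintro rfl; exact (by norm_num : ¬ Odd 2) hqo
  have hq3 : 3 ≤ q := by have := hq.two_le; omega
  have hq2p : q ^ 2 < p := by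
    have h := (Real.lt_sqrt (by positivity)).mp hqlt
    exact_mod_cast h
  have hqp : ¬ q ∣ p := by
    intro hd
    rcases hp.eq_one_or_self_of_dvd q hd with h | h <;> nlinarith
  have hpne : (p : ZMod q) ≠ 0 := fun h =>
    hqp ((ZMod.natCast_eq_zero_iff p q).mp h)
  obtain ⟨s, hs⟩ := hsq
  have hsne : s ≠ 0 := by
    rintro rfl; rw [mul_zero] at hs; exact hpne (neg_eq_zero.mp hs)
  -- construct x1 : odd, 0 < x1 < q, q ∣ p + x1^2
  set t := s.val with ht
  have htq : t < q := ZMod.val_lt s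
  have ht0 : t ≠ 0 := fun h => hsne (by rwa [← ZMod.val_eq_zero])
  have hts : ((t : ℕ) : ZMod q) = s := by
    rw [ht]
    simp [ZMod.natCast_val, ZMod.cast_id]
  set x1 := if t % 2 = 1 then t else q - t with hx1def
  obtain ⟨u, hu⟩ := hqo
  have hx1odd : Odd x1 := by
    rw [Nat.odd_iff, hx1def]
    by_cases h : t % 2 = 1 <;> simp [h] <;> omega
  have hx1lt : x1 < q := by rw [hx1def]; split <;> omega
  have hx1pos : 0 < x1 := by rw [hx1def]; split <;> omega
  have hx1cast : ((x1 : ℕ) : ZMod q) = s ∨ ((x1 : ℕ) : ZMod q) = -s := by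
    rw [hx1def]; split
    · left; exact hts
    · right
      have hcast : ((q - t : ℕ) : ZMod q) = (q : ZMod q) - (t : ZMod q) := by
        push_cast [Nat.cast_sub htq.le]; ring
      rw [hcast, ZMod.natCast_self, hts]; ring
  have hdvd1 : q ∣ p + x1 ^ 2 := by
    rw [← ZMod.natCast_eq_zero_iff]
    push_cast
    rcases hx1cast with h | h <;> rw [h] <;> linear_combination -hs
  have hx1p : x1 ^ 2 < p := by nlinarith
  obtain ⟨b, hb⟩ := aux_pow p q h19 hmod hω hq ⟨u, hu⟩ x1 hx1odd hx1p hdvd1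
  -- case b ≤ 1 : impossible by size
  rcases Nat.lt_or_ge b 2 with hble | hbge
  · have hqb : q ^ b ≤ q := by
      calc q ^ b ≤ q ^ 1 := Nat.pow_le_pow_right (by omega) (by omega)
        _ = q := pow_one q
    have hplt : p < 4 * q := by omega
    have : q < 4 := by nlinarith
    omega
  rcases Nat.even_or_odd b with hbe | hbo
  · -- b even : p factors, contradiction with primality
    obtain ⟨c, hc⟩ := hbe
    have hc1 : 1 ≤ c := by omega
    set Q := q ^ c with hQ
    have hqQ : q ≤ Q := Nat.le_self_pow (by omega) q
    have h4 : p + x1 ^ 2 = 4 * (Q * Q) := by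
      rw [hb, hc, hQ, ← pow_add]
    have hx1Q : x1 < 2 * Q := by omega
    have h4' : (p : ℤ) + (x1 : ℤ) ^ 2 = 4 * ((Q : ℤ) * Q) := by exact_mod_cast h4
    have hnat : p = (2 * Q - x1) * (2 * Q + x1) := by
      zify [hx1Q.le]
      linear_combination h4'
    rcases hp.eq_one_or_self_of_dvd (2 * Q + x1) ⟨2 * Q - x1, by rw [hnat]; ring⟩
      with h | h
    · omega
    · rw [h] at hnat
      have h1 : (2 * Q - x1) * p = 1 * p := by rw [one_mul, ← hnat]
      have h2 := Nat.eq_of_mul_eq_mul_right (by omega : 0 < p) h1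
      omega
  · -- b odd, b ≥ 3 : use x2 = 2q - x1
    have hb3 : 3 ≤ b := by rcases hbo with ⟨v, hv⟩; omega
    set x2 := 2 * q - x1 with hx2def
    have hx2odd : Odd x2 := by rw [Nat.odd_iff] at hx1odd ⊢; omega
    have hsq2 : x2 ^ 2 = x1 ^ 2 + 4 * (q * (q - x1)) := by
      rw [hx2def]
      zify [hx1lt.le, (by omega : x1 ≤ 2 * q)]
      ring
    have hq3b : q ^ 3 ≤ q ^ b := Nat.pow_le_pow_right (by omega) hb3
    have hqcube : q ^ 3 = q * q * q := by ring
    have hx2lt : x2 < 2 * q := by omega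
    have hx2p : x2 ^ 2 < p := by nlinarith
    have hdvd2 : q ∣ p + x2 ^ 2 := by
      have h1 : q ∣ 4 * q ^ b := Dvd.dvd.mul_left (dvd_pow_self q (by omega)) 4
      have h2 : q ∣ 4 * (q * (q - x1)) := ⟨4 * (q - x1), by ring⟩
      have h3 : p + x2 ^ 2 = 4 * q ^ b + 4 * (q * (q - x1)) := by omega
      rw [h3]; exact Nat.dvd_add h1 h2
    obtain ⟨b2, hb2⟩ := aux_pow p q h19 hmod hω hq ⟨u, hu⟩ x2 hx2odd hx2p hdvd2
    have hkey : q ^ b2 = q ^ b + q * (q - x1) := by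
      have h3 : p + x2 ^ 2 = 4 * q ^ b + 4 * (q * (q - x1)) := by omega
      rw [hb2] at h3
      set c1 := q * (q - x1)
      set B := q ^ b
      set B2 := q ^ b2
      omega
    have hpos : 0 < q * (q - x1) := Nat.mul_pos (by omega) (by omega)
    have hgt : b < b2 := by
      have hlt : q ^ b < q ^ b2 := by
        rw [hkey]; exact Nat.lt_add_of_pos_right hpos
      exact (Nat.pow_lt_pow_iff_right (by omega : 1 < q)).mp hlt
    have hdvd3 : q ^ 3 ∣ q * (q - x1) := by
      have h1 : q ^ 3 ∣ q ^ b := pow_dvd_pow q hb3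
      have h2 : q ^ 3 ∣ q ^ b2 := pow_dvd_pow q (by omega)
      have h3 : q * (q - x1) = q ^ b2 - q ^ b := by omega
      rw [h3]; exact Nat.dvd_sub h2 h1
    have hdvd4 : q ^ 2 ∣ (q - x1) := by
      have h1 : q * q ^ 2 ∣ q * (q - x1) := by
        rw [show q * q ^ 2 = q ^ 3 by ring]; exact hdvd3
      exact (mul_dvd_mul_iff_left (by omega : q ≠ 0)).mp h1
    have hle := Nat.le_of_dvd (by omega) hdvd4
    have h9 : q * q ≤ q - x1 := by rw [← sq]; exact hle
    have h10 : q * q < q := lt_of_le_of_lt h9 (by omega)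
    exact absurd h10 (not_lt.mpr (Nat.le_mul_of_pos_left q (by omega)))
end

section
/- Let p be a prime and r an odd prime with 4r² < p and r | p + y² for some odd positive integer y with y < r. Suppose p + y² = 2r^b and p + (2r − y)² = 2r^c for positive integers b, c. Then b = 1 and c > b. -/
theorem stmt_7 (p r y b c : ℕ) (hp : p.Prime) (hr : r.Prime) (hrodd : Odd r)
    (hrp : 4 * r ^ 2 < p) (hy : Odd y) (hy0 : 0 < y) (hyr : y < r)
    (hdvd : r ∣ p + y ^ 2) (hb : 0 < b) (hc : 0 < c)
    (heq1 : p + y ^ 2 = 2 * r ^ b) (heq2 : p + (2 * r - y) ^ 2 = 2 * r ^ c) :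
    b = 1 ∧ b < c := by
  have hr1 : 1 < r := hr.one_lt
  have key : (2 * r - y) ^ 2 = y ^ 2 + 4 * r * (r - y) := by
    have h1 : y ≤ 2 * r := by omega
    have h2 : y ≤ r := hyr.le
    zify [h1, h2]; ring
  have heq3 : 2 * r ^ c = 2 * r ^ b + 4 * r * (r - y) := by
    rw [← heq2, ← heq1, key]; ring
  have hry : 0 < r - y := by omega
  have hbc : b < c := by
    have hlt : r ^ b < r ^ c := by nlinarith
    exact (pow_lt_pow_iff_right₀ hr1).mp hlt
  refine ⟨?_, hbc⟩
  by_contra hb2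
  have hb2' : 2 ≤ b := by omega
  have hd1 : r ^ 2 ∣ 2 * r ^ b := Dvd.dvd.mul_left (pow_dvd_pow r hb2') 2
  have hd2 : r ^ 2 ∣ 2 * r ^ c := Dvd.dvd.mul_left (pow_dvd_pow r (by omega)) 2
  have hd3 : r ^ 2 ∣ 4 * r * (r - y) := by
    have : 4 * r * (r - y) = 2 * r ^ c - 2 * r ^ b := by omega
    rw [this]
    exact Nat.dvd_sub hd2 hd1
  have hd4 : r ∣ 4 * (r - y) := by
    have hrpos : 0 < r := by omega
    have : r * r ∣ r * (4 * (r - y)) := by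
      have : r * (4 * (r - y)) = 4 * r * (r - y) := by ring
      rw [this, ← pow_two]; exact hd3
    exact (mul_dvd_mul_iff_left (by omega : r ≠ 0)).mp this
  rcases (Nat.Prime.dvd_mul hr).mp hd4 with h4 | hdr
  · have h4sq : r ∣ 2 ^ 2 := by norm_num; exact h4
    have : r ∣ 2 := hr.dvd_of_dvd_pow h4sq
    have := (Nat.prime_dvd_prime_iff_eq hr Nat.prime_two).mp this
    rw [Nat.odd_iff] at hrodd
    omega
  · have := Nat.le_of_dvd hry hdr
    omega
end

section
/- Let p ≡ 1 (mod 8) be prime. Then there exists an odd positive integer x with x² < p and a positive integer y such that p + x² = 2y². -/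
private lemma aux_sqrt2 (u v : ℕ) (hv : v ≠ 0) : u ^ 2 ≠ 2 * v ^ 2 := by
  intro h
  have hu : u ≠ 0 := by
    rintro rfl
    simp at h
    have h2 : v ^ 2 = 0 := by omega
    exact hv ((pow_eq_zero_iff two_ne_zero).mp h2)
  have h2 := congrArg (fun m => m.factorization 2) h
  simp only [Nat.factorization_pow, Nat.factorization_mul two_ne_zero (pow_ne_zero 2 hv),
    Nat.Prime.factorization Nat.prime_two, Finsupp.add_apply, Finsupp.smul_apply,
    Finsupp.single_apply, smul_eq_mul, if_true] at h2
  omega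

private lemma aux_not_sq {p : ℕ} (hp : p.Prime) (k : ℤ) : k ^ 2 ≠ (p : ℤ) := by
  intro h
  have hd : k.natAbs ∣ p := by
    refine ⟨k.natAbs, ?_⟩
    have := congrArg Int.natAbs h
    simpa [sq, Int.natAbs_mul] using this.symm
  have hsq : k.natAbs * k.natAbs = p := by
    have := congrArg Int.natAbs h
    simpa [sq, Int.natAbs_mul] using this
  rcases (Nat.Prime.eq_one_or_self_of_dvd hp _ hd) with h1 | h1
  · rw [h1] at hsq; simpa [hsq.symm] using hp.one_lt
  · rw [h1] at hsq
    nlinarith [hp.one_lt]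

theorem stmt_9 (p : ℕ) (hp : p.Prime) (hmod : p % 8 = 1) :
    ∃ x y : ℕ, Odd x ∧ 0 < x ∧ x ^ 2 < p ∧ 0 < y ∧ p + x ^ 2 = 2 * y ^ 2 := by
  haveI : Fact p.Prime := ⟨hp⟩
  have hp2 : p ≠ 2 := by omega
  obtain ⟨a, ha⟩ : IsSquare (2 : ZMod p) :=
    (ZMod.exists_sq_eq_two_iff hp2).mpr (Or.inl hmod)
  -- pigeonhole
  set n := p.sqrt + 1 with hn
  have hpn : p < n * n := Nat.lt_succ_sqrt p
  have hcard : Fintype.card (ZMod p) < Fintype.card (Fin n × Fin n) := by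
    simpa [ZMod.card] using hpn
  obtain ⟨⟨i, j⟩, ⟨i', j'⟩, hne, heq⟩ :=
    Fintype.exists_ne_map_eq_of_card_lt
      (fun q : Fin n × Fin n => ((q.1 : ℕ) : ZMod p) - a * ((q.2 : ℕ) : ZMod p)) hcard
  simp only at heq
  set u : ℤ := (i : ℕ) - (i' : ℕ) with hu
  set v : ℤ := (j : ℕ) - (j' : ℕ) with hv
  have key : ((u : ℤ) : ZMod p) = a * ((v : ℤ) : ZMod p) := by
    push_cast [hu, hv]
    linear_combination heq
  -- bounds
  have hi : (i : ℕ) ≤ p.sqrt := Nat.lt_succ_iff.mp i.isLt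
  have hi' : (i' : ℕ) ≤ p.sqrt := Nat.lt_succ_iff.mp i'.isLt
  have hj : (j : ℕ) ≤ p.sqrt := Nat.lt_succ_iff.mp j.isLt
  have hj' : (j' : ℕ) ≤ p.sqrt := Nat.lt_succ_iff.mp j'.isLt
  have hsp : (p.sqrt : ℤ) ^ 2 ≤ (p : ℤ) := by
    have := Nat.sqrt_le' p
    push_cast
    exact_mod_cast (by nlinarith : p.sqrt ^ 2 ≤ p)
  have hu2 : u ^ 2 ≤ (p : ℤ) := by
    have : u ^ 2 ≤ (p.sqrt : ℤ) ^ 2 := by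
      have h1 : -(p.sqrt : ℤ) ≤ u := by simp [hu]; omega
      have h2 : u ≤ (p.sqrt : ℤ) := by simp [hu]; omega
      nlinarith
    linarith
  have hv2 : v ^ 2 ≤ (p : ℤ) := by
    have : v ^ 2 ≤ (p.sqrt : ℤ) ^ 2 := by
      have h1 : -(p.sqrt : ℤ) ≤ v := by simp [hv]; omega
      have h2 : v ≤ (p.sqrt : ℤ) := by simp [hv]; omega
      nlinarith
    linarith
  have hu2' : u ^ 2 < (p : ℤ) := lt_of_le_of_ne hu2 (aux_not_sq hp u)
  have hv2' : v ^ 2 < (p : ℤ) := lt_of_le_of_ne hv2 (aux_not_sq hp v)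
  -- v ≠ 0
  have hvne : v ≠ 0 := by
    intro h0
    have hu0 : ((u : ℤ) : ZMod p) = 0 := by rw [key, h0]; simp
    have : (p : ℤ) ∣ u := (ZMod.intCast_zmod_eq_zero_iff_dvd u p).mp hu0
    have habs : |u| < (p : ℤ) := by
      rw [abs_lt]
      have hsl : p.sqrt < p := Nat.sqrt_lt_self hp.one_lt
      constructor <;> (simp only [hu]; push_cast; omega)
    have hupz : u = 0 := Int.eq_zero_of_abs_lt_dvd this habs
    apply hne
    have : (i : ℕ) = (i' : ℕ) := by omega
    have hjj : (j : ℕ) = (j' : ℕ) := by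
      have : v = 0 := h0
      omega
    simp [Prod.ext_iff, Fin.ext_iff, this, hjj]
  -- p ∣ 2v² - u²
  have hdvd : (p : ℤ) ∣ 2 * v ^ 2 - u ^ 2 := by
    apply (ZMod.intCast_zmod_eq_zero_iff_dvd _ p).mp
    push_cast
    rw [key]
    ring_nf
    rw [show a ^ 2 = a * a by ring, ← ha]
    ring
  -- 2v² - u² ≠ 0
  have hne0 : 2 * v ^ 2 - u ^ 2 ≠ 0 := by
    intro h0
    apply aux_sqrt2 u.natAbs v.natAbs (by simpa using hvne)
    have : u ^ 2 = 2 * v ^ 2 := by linarith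
    have := congrArg Int.natAbs this
    simpa [sq, Int.natAbs_mul] using this
  -- conclude 2v² - u² = p
  have heqp : 2 * v ^ 2 - u ^ 2 = (p : ℤ) := by
    rcases hdvd with ⟨c, hc⟩
    have hpp : (0:ℤ) < p := by exact_mod_cast hp.pos
    have hub : (0:ℤ) ≤ u ^ 2 := sq_nonneg u
    have hvb : (0:ℤ) ≤ v ^ 2 := sq_nonneg v
    have hlow : -(p:ℤ) < 2 * v ^ 2 - u ^ 2 := by linarith
    have hhigh : 2 * v ^ 2 - u ^ 2 < 2 * p := by linarith
    have hc1 : c = 1 := by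
      rcases lt_trichotomy c 1 with h | h | h
      · exfalso
        rcases eq_or_lt_of_le (by omega : c ≤ 0) with h' | h'
        · exact hne0 (by simp [hc, h'])
        · have h1 : c ≤ -1 := by omega
          have := mul_le_mul_of_nonneg_left h1 (le_of_lt hpp)
          linarith
      · exact h
      · exfalso
        have h1 : (2:ℤ) ≤ c := by omega
        have := mul_le_mul_of_nonneg_left h1 (le_of_lt hpp)
        linarith
    rw [hc, hc1, mul_one]
  -- extract x, y
  have hune : u ≠ 0 := by
    intro h0
    rw [h0] at heqp
    have : 2 * v ^ 2 = (p:ℤ) := by linarith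
    have h2 : (2:ℤ) ∣ (p:ℤ) := ⟨v^2, by linarith⟩
    have : (2:ℕ) ∣ p := by exact_mod_cast h2
    omega
  have hx : ((u.natAbs : ℤ)) ^ 2 = u ^ 2 := by rw [← Int.abs_eq_natAbs, sq_abs]
  have hy : ((v.natAbs : ℤ)) ^ 2 = v ^ 2 := by rw [← Int.abs_eq_natAbs, sq_abs]
  have hcast : (p : ℤ) + (u.natAbs : ℤ) ^ 2 = 2 * (v.natAbs : ℤ) ^ 2 := by
    rw [hx, hy]; linarith
  have hnat : p + u.natAbs ^ 2 = 2 * v.natAbs ^ 2 := by exact_mod_cast hcast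
  refine ⟨u.natAbs, v.natAbs, ?_, ?_, ?_, ?_, hnat⟩
  · rcases Nat.even_or_odd u.natAbs with he | ho
    · exfalso
      obtain ⟨k, hk⟩ := he
      have : u.natAbs ^ 2 = 2 * (2 * k * k) := by rw [hk]; ring
      omega
    · exact ho
  · simpa [Int.natAbs_pos] using hune
  · have : ((u.natAbs : ℤ)) ^ 2 < (p : ℤ) := by rw [hx]; exact hu2'
    exact_mod_cast this
  · simpa [Int.natAbs_pos] using hvne
end

section
/- Let p ≡ 7 (mod 8) be prime. Then there exists an odd positive integer x with x² < p and a positive integer t such that p + x² = 8t². -/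
lemma aux_nat_sq (a b : ℕ) (h : a ^ 2 = 2 * b ^ 2) : b = 0 := by
  by_contra hb
  have ha : a ≠ 0 := by
    intro h0; rw [h0] at h; simp at h; omega
  have h1 := congrArg (fun n => n.factorization 2) h
  simp only [Nat.factorization_pow, Nat.factorization_mul (by norm_num : (2:ℕ) ≠ 0)
    (pow_ne_zero 2 hb), Nat.factorization_pow, Nat.Prime.factorization_self Nat.prime_two] at h1
  have h2 : 2 * a.factorization 2 = 1 + 2 * b.factorization 2 := by
    simpa [Nat.Prime.factorization_self Nat.prime_two] using h1
  omega

lemma aux_sq_ne_two_sq (x y : ℤ) (h : x ^ 2 = 2 * y ^ 2) : y = 0 := by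
  have : x.natAbs ^ 2 = 2 * y.natAbs ^ 2 := by
    have := congrArg Int.natAbs h
    simpa [Int.natAbs_mul, Int.natAbs_pow] using this
  have := aux_nat_sq _ _ this
  omega

set_option maxHeartbeats 1000000 in
theorem stmt_10 (p : ℕ) (hp : p.Prime) (hmod : p % 8 = 7) :
    ∃ x t : ℕ, Odd x ∧ 0 < x ∧ x ^ 2 < p ∧ 0 < t ∧ p + x ^ 2 = 8 * t ^ 2 := by
  have hp2 : p ≠ 2 := by omega
  haveI : Fact p.Prime := ⟨hp⟩
  -- 2 is a square mod p
  obtain ⟨s, hs⟩ : IsSquare (2 : ZMod p) :=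
    (ZMod.exists_sq_eq_two_iff hp2).mpr (Or.inr hmod)
  have hs2 : s * s = 2 := hs.symm
  set n := Nat.sqrt p with hn
  have hnp : p < (n + 1) ^ 2 := by
    have := Nat.lt_succ_sqrt p; nlinarith [Nat.lt_succ_sqrt p]
  have hnlt : n < p := Nat.sqrt_lt_self (by omega)
  -- pigeonhole
  have hcard : Fintype.card (ZMod p) < Fintype.card (Fin (n+1) × Fin (n+1)) := by
    simp [ZMod.card]
    nlinarith
  obtain ⟨⟨a₁, b₁⟩, ⟨a₂, b₂⟩, hne, heq⟩ :=
    Fintype.exists_ne_map_eq_of_card_lt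
      (fun q : Fin (n+1) × Fin (n+1) => (q.1 : ZMod p) + s * (q.2 : ZMod p)) hcard
  simp only at heq
  obtain ⟨x, hxdef⟩ : ∃ x : ℤ, x = (a₁ : ℤ) - (a₂ : ℤ) := ⟨_, rfl⟩
  obtain ⟨y, hydef⟩ : ∃ y : ℤ, y = (b₁ : ℤ) - (b₂ : ℤ) := ⟨_, rfl⟩
  have hxz : ((x : ℤ) : ZMod p) = - s * ((y : ℤ) : ZMod p) := by
    rw [hxdef, hydef]
    push_cast
    linear_combination heq
  have hxb : x ^ 2 ≤ (n : ℤ) ^ 2 := by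
    have h1 : (a₁ : ℤ) ≤ n := by exact_mod_cast Nat.lt_succ_iff.mp a₁.isLt
    have h2 : (a₂ : ℤ) ≤ n := by exact_mod_cast Nat.lt_succ_iff.mp a₂.isLt
    have h3 : (0 : ℤ) ≤ a₁ := by positivity
    have h4 : (0 : ℤ) ≤ a₂ := by positivity
    nlinarith
  have hyb : y ^ 2 ≤ (n : ℤ) ^ 2 := by
    have h1 : (b₁ : ℤ) ≤ n := by exact_mod_cast Nat.lt_succ_iff.mp b₁.isLt
    have h2 : (b₂ : ℤ) ≤ n := by exact_mod_cast Nat.lt_succ_iff.mp b₂.isLt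
    have h3 : (0 : ℤ) ≤ b₁ := by positivity
    have h4 : (0 : ℤ) ≤ b₂ := by positivity
    nlinarith
  have hn2p : (n : ℤ) ^ 2 ≤ p := by exact_mod_cast Nat.sqrt_le' p
  -- no integer with square p
  have hnosq : ∀ z : ℤ, z ^ 2 ≠ (p : ℤ) := by
    intro z hz
    have : z.natAbs ^ 2 = p := by
      have := congrArg Int.natAbs hz
      simpa [Int.natAbs_pow] using this
    have hdvd : z.natAbs ∣ p := ⟨z.natAbs, by rw [← this]; ring⟩
    rcases (Nat.Prime.eq_one_or_self_of_dvd hp _ hdvd) with h1 | h1 <;>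
      rw [h1] at this <;> nlinarith [hp.two_le]
  have hx2p : x ^ 2 < p := lt_of_le_of_ne (le_trans hxb hn2p) (hnosq x)
  have hy2p : y ^ 2 < p := lt_of_le_of_ne (le_trans hyb hn2p) (hnosq y)
  -- y ≠ 0
  have hyne : y ≠ 0 := by
    intro hy0
    have hx0 : ((x : ℤ) : ZMod p) = 0 := by rw [hxz, hy0]; simp
    have : (p : ℤ) ∣ x := (ZMod.intCast_zmod_eq_zero_iff_dvd x p).mp hx0
    have hxx : x = 0 := by
      rcases this with ⟨k, hk⟩
      by_contra hxne
      have hk0 : k ≠ 0 := by rintro rfl; simp at hk; exact hxne hk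
      have hp2le : (2:ℤ) ≤ p := by exact_mod_cast hp.two_le
      have hk1 : 1 ≤ k ^ 2 := by nlinarith [Int.one_le_abs hk0, sq_abs k, abs_nonneg k]
      have hge : (p:ℤ)^2 ≤ x^2 := by rw [hk]; nlinarith
      nlinarith
    have ha : a₁ = a₂ := by
      have : (a₁ : ℤ) = (a₂ : ℤ) := by omega
      exact Fin.ext (by exact_mod_cast this)
    have hb : b₁ = b₂ := by
      have : (b₁ : ℤ) = (b₂ : ℤ) := by omega
      exact Fin.ext (by exact_mod_cast this)
    exact hne (by rw [ha, hb])
  -- p ∣ x² − 2y²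
  have hdvd : (p : ℤ) ∣ x ^ 2 - 2 * y ^ 2 := by
    rw [← ZMod.intCast_zmod_eq_zero_iff_dvd]
    push_cast
    rw [hxz]
    ring_nf
    rw [mul_comm s s] at hs2
    linear_combination (((y:ℤ) : ZMod p))^2 * hs2
  obtain ⟨k, hk⟩ := hdvd
  have hppos : (0:ℤ) < p := by exact_mod_cast hp.pos
  have hyn0 : (0:ℤ) < y ^ 2 := by positivity
  have hk1 : k = -1 := by
    have hub : (p:ℤ) * k < p := by nlinarith
    have hlb : -2 * (p:ℤ) < p * k := by nlinarith
    have : k ≤ 0 := by nlinarith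
    have : -2 < k := by nlinarith
    interval_cases k
    · rfl
    · exfalso
      have : x ^ 2 = 2 * y ^ 2 := by linarith [hk]
      exact hyne (aux_sq_ne_two_sq x y this)
  rw [hk1] at hk
  -- now 2 y² = p + x²
  have hmain : 2 * y ^ 2 = (p:ℤ) + x ^ 2 := by linarith
  -- pass to naturals
  set X := x.natAbs with hX
  set Y := y.natAbs with hY
  have hmainN : 2 * Y ^ 2 = p + X ^ 2 := by
    have hx2 : (X:ℤ)^2 = x^2 := by simp [hX, sq_abs]
    have hy2 : (Y:ℤ)^2 = y^2 := by simp [hY, sq_abs]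
    have : (2 * Y ^ 2 : ℤ) = ((p + X ^ 2 : ℕ) : ℤ) := by push_cast [hx2, hy2]; linarith
    exact_mod_cast this
  have hXp : X ^ 2 < p := by
    have : ((X:ℕ):ℤ)^2 < p := by simp [hX, sq_abs]; exact hx2p
    exact_mod_cast this
  have hpodd : p % 2 = 1 := by omega
  have hXodd : X % 2 = 1 := by
    rcases Nat.even_or_odd X with ⟨m, hm⟩ | ⟨m, hm⟩
    · exfalso
      have h2 : X ^ 2 = 2 * (2 * m * m) := by rw [hm]; ring
      omega
    · omega
  have hXpos : 0 < X := by
    rcases Nat.eq_zero_or_pos X with h | h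
    · exfalso; rw [h] at hmainN; simp at hmainN; omega
    · exact h
  -- X² % 8 = 1
  have hX8 : X ^ 2 % 8 = 1 := by
    obtain ⟨m, hm⟩ : ∃ m, X = 2 * m + 1 := ⟨X / 2, by omega⟩
    have : X ^ 2 = 4 * (m * (m + 1)) + 1 := by rw [hm]; ring
    have hmm : m * (m + 1) % 2 = 0 := by
      rcases Nat.even_or_odd m with ⟨l, hl⟩ | ⟨l, hl⟩
      · have : m * (m + 1) = 2 * (l * (m + 1)) := by rw [hl]; ring
        omega
      · have : m * (m + 1) = 2 * ((2 * l + 1) * (l + 1)) := by rw [hl]; ring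
        omega
    omega
  -- Y even
  have h8 : 8 ∣ 2 * Y ^ 2 := by omega
  have hYeven : Y % 2 = 0 := by
    rcases Nat.even_or_odd Y with ⟨l, hl⟩ | ⟨l, hl⟩
    · omega
    · exfalso
      have : Y ^ 2 = 4 * (l * l + l) + 1 := by rw [hl]; ring
      omega
  obtain ⟨t, ht⟩ : ∃ t, Y = 2 * t := ⟨Y / 2, by omega⟩
  refine ⟨X, t, ⟨X / 2, by omega⟩, hXpos, hXp, ?_, ?_⟩
  · have hY0 : Y ≠ 0 := by
      intro h0; rw [h0] at hmainN; simp at hmainN; omega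
    omega
  · rw [ht] at hmainN; ring_nf at hmainN ⊢; omega
end

section
/- Let p ≥ 47 be a prime with p ≡ 7 (mod 8) such that p + x² has at most two distinct prime factors for every odd integer x with x² < p. Let q < √p be an odd prime dividing p + x² for some odd positive integer x < q, and write p + x² = 2^a q^k with a ≥ 3. Then k ≤ 2. -/
private lemma odd_sq_mod8 (m : ℕ) (hm : Odd m) : m ^ 2 % 8 = 1 := by
  obtain ⟨t, rfl⟩ := hm
  have h : (2 * t + 1) ^ 2 = 4 * (t * (t + 1)) + 1 := by ring
  obtain ⟨s, hs⟩ := Nat.even_mul_succ_self t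
  omega

private lemma aux_pow_form (q N : ℕ) (hq : q.Prime) (hq2 : q ≠ 2) (hN0 : N ≠ 0)
    (hcard : N.primeFactors.card ≤ 2) (h8 : 2 ^ 3 ∣ N) (hqN : q ∣ N)
    (hq2N : ¬ q ^ 2 ∣ N) :
    ∃ b, 3 ≤ b ∧ N = 2 ^ b * q := by
  have h2N : (2 : ℕ) ∣ N := dvd_trans (by norm_num) h8
  have h2m : 2 ∈ N.primeFactors := Nat.mem_primeFactors.mpr ⟨Nat.prime_two, h2N, hN0⟩
  have hqm : q ∈ N.primeFactors := Nat.mem_primeFactors.mpr ⟨hq, hqN, hN0⟩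
  have hne : (2 : ℕ) ≠ q := fun h => hq2 h.symm
  have hsub : ({2, q} : Finset ℕ) ⊆ N.primeFactors := by
    intro r hr
    simp only [Finset.mem_insert, Finset.mem_singleton] at hr
    rcases hr with rfl | rfl <;> assumption
  have hcard2 : ({2, q} : Finset ℕ).card = 2 := Finset.card_pair hne
  have hset : N.primeFactors = {2, q} :=
    (Finset.eq_of_subset_of_card_le hsub (by omega)).symm
  have hfq : N.factorization q = 1 := by
    have h1 : 1 ≤ N.factorization q := by
      rw [← hq.pow_dvd_iff_le_factorization hN0]; simpa using hqN
    have h2 : N.factorization q < 2 := by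
      by_contra h
      push_neg at h
      exact hq2N ((hq.pow_dvd_iff_le_factorization hN0).mpr h)
    omega
  have hfb : 3 ≤ N.factorization 2 := by
    rw [← Nat.prime_two.pow_dvd_iff_le_factorization hN0]; exact h8
  refine ⟨N.factorization 2, hfb, ?_⟩
  conv_lhs => rw [← Nat.factorization_prod_pow_eq_self hN0]
  rw [Finsupp.prod, Nat.support_factorization, hset, Finset.prod_pair hne, hfq, pow_one]

private lemma small_ineq (q : ℕ) (h : 3 ≤ q) : 8 * q < 4 * q ^ 3 := by
  have h1 : 9 ≤ q * q := Nat.mul_le_mul h h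
  have h3 : 9 * q ≤ q * q * q := Nat.mul_le_mul_right q h1
  calc 8 * q < 4 * (9 * q) := by omega
  _ ≤ 4 * (q * q * q) := by omega
  _ = 4 * q ^ 3 := by ring

set_option maxHeartbeats 1000000 in
theorem stmt_11 (p q x a k : ℕ) (hp : p.Prime) (h47 : 47 ≤ p) (hmod : p % 8 = 7)
    (hω : ∀ z : ℕ, Odd z → z ^ 2 < p → (p + z ^ 2).primeFactors.card ≤ 2)
    (hq : q.Prime) (hqodd : Odd q) (hqp : (q : ℝ) < Real.sqrt p)
    (hx : Odd x) (hx0 : 0 < x) (hxq : x < q) (hdvd : q ∣ p + x ^ 2)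
    (ha : 3 ≤ a) (hk : 0 < k) (heq : p + x ^ 2 = 2 ^ a * q ^ k) :
    k ≤ 2 := by
  by_contra hk3
  push_neg at hk3
  have hq2 : q ≠ 2 := by
    rintro rfl
    exact (Nat.not_odd_iff_even.mpr (by norm_num)) hqodd
  have hq3 : 3 ≤ q := by
    have := hq.two_le
    omega
  -- q^2 < p
  have hq2p : q ^ 2 < p := by
    have h0 : (0 : ℝ) ≤ (q : ℝ) := by positivity
    have := (Real.lt_sqrt h0).mp hqp
    exact_mod_cast this
  -- 8 q^3 ≤ p + x^2
  have h8q3 : 8 * q ^ 3 ≤ p + x ^ 2 := by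
    rw [heq]
    have h1 : (2 : ℕ) ^ 3 ≤ 2 ^ a := Nat.pow_le_pow_right (by norm_num) ha
    have h2 : q ^ 3 ≤ q ^ k := Nat.pow_le_pow_right (by omega) hk3
    calc 8 * q ^ 3 = 2 ^ 3 * q ^ 3 := by norm_num
    _ ≤ 2 ^ a * q ^ k := Nat.mul_le_mul h1 h2
  have hx2q2 : x ^ 2 < q ^ 2 := Nat.pow_lt_pow_left hxq (by norm_num)
  have hp4q3 : 4 * q ^ 3 < p := by omega
  have h9q2 : 9 * q ^ 2 < p := by nlinarith
  -- the two auxiliary values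
  have hx2q : x ≤ 2 * q := by omega
  have hodd1 : Odd (2 * q - x) := by
    rw [Nat.odd_iff] at hx ⊢; omega
  have hodd2 : Odd (2 * q + x) := by
    rw [Nat.odd_iff] at hx ⊢; omega
  have keyN : (2 * q - x) ^ 2 + 4 * q * x = 4 * q ^ 2 + x ^ 2 := by
    zify [hx2q]; ring
  have keyM : (2 * q + x) ^ 2 = 4 * q ^ 2 + 4 * q * x + x ^ 2 := by ring
  set N := p + (2 * q - x) ^ 2 with hN
  set M := p + (2 * q + x) ^ 2 with hM
  have heqN : N + 4 * q * x = 2 ^ a * q ^ k + 4 * q ^ 2 := by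
    rw [hN]; omega
  have heqM : M = 2 ^ a * q ^ k + 4 * q ^ 2 + 4 * q * x := by
    rw [hM]; omega
  have hqk2 : q ^ 2 ∣ q ^ k := pow_dvd_pow q (by omega)
  have hqdT : q ∣ 2 ^ a * q ^ k + 4 * q ^ 2 :=
    dvd_add (Dvd.dvd.mul_left (dvd_trans (dvd_pow_self q (by omega)) dvd_rfl) _)
      ⟨4 * q, by ring⟩
  have hq2dT : q ^ 2 ∣ 2 ^ a * q ^ k + 4 * q ^ 2 :=
    dvd_add (Dvd.dvd.mul_left hqk2 _) ⟨4, by ring⟩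
  have hqx : q ∣ 4 * q * x := ⟨4 * x, by ring⟩
  -- divisibility facts for N
  have hqN : q ∣ N := by
    have h1 : N = (2 ^ a * q ^ k + 4 * q ^ 2) - 4 * q * x := by omega
    rw [h1]; exact Nat.dvd_sub hqdT hqx
  have hnot2x : ¬ q ∣ 4 * x := by
    intro h
    rcases (Nat.Prime.dvd_mul hq).mp h with h4 | hxx
    · have hq4 : q ≤ 4 := Nat.le_of_dvd (by norm_num) h4
      have hq3' : q = 3 := by
        rw [Nat.odd_iff] at hqodd
        omega
      rw [hq3'] at h4
      norm_num at h4
    · have := Nat.le_of_dvd hx0 hxx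
      omega
  have hq2N : ¬ q ^ 2 ∣ N := by
    intro h
    have h1 : q ^ 2 ∣ 4 * q * x := by
      have h2 : q ^ 2 ∣ N + 4 * q * x := heqN ▸ hq2dT
      have h3 : 4 * q * x = (N + 4 * q * x) - N := by omega
      rw [h3]; exact Nat.dvd_sub h2 h
    apply hnot2x
    have : q * q ∣ q * (4 * x) := by
      have e : q * (4 * x) = 4 * q * x := by ring
      rw [e, ← sq]; exact h1
    exact (Nat.mul_dvd_mul_iff_left (by omega : 0 < q)).mp this
  have hqM : q ∣ M := by
    rw [heqM]; exact dvd_add hqdT hqx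
  have hq2M : ¬ q ^ 2 ∣ M := by
    intro h
    have h1 : q ^ 2 ∣ 4 * q * x := by
      have h3 : 4 * q * x = M - (2 ^ a * q ^ k + 4 * q ^ 2) := by omega
      rw [h3]; exact Nat.dvd_sub h hq2dT
    apply hnot2x
    have : q * q ∣ q * (4 * x) := by
      have e : q * (4 * x) = 4 * q * x := by ring
      rw [e, ← sq]; exact h1
    exact (Nat.mul_dvd_mul_iff_left (by omega : 0 < q)).mp this
  -- 8 divides N and M
  have h8N : 2 ^ 3 ∣ N := by
    have := odd_sq_mod8 _ hodd1
    have h : N % 8 = 0 := by omega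
    omega
  have h8M : 2 ^ 3 ∣ M := by
    have := odd_sq_mod8 _ hodd2
    have h : M % 8 = 0 := by omega
    omega
  -- squares are small
  have hsqN : (2 * q - x) ^ 2 < p := by
    have : (2 * q - x) ^ 2 ≤ (2 * q) ^ 2 := Nat.pow_le_pow_left (by omega) 2
    nlinarith
  have hsqM : (2 * q + x) ^ 2 < p := by
    have h1 : 2 * q + x < 3 * q := by omega
    have : (2 * q + x) ^ 2 < (3 * q) ^ 2 := Nat.pow_lt_pow_left h1 (by norm_num)
    nlinarith
  have hN0 : N ≠ 0 := by omega
  have hM0 : M ≠ 0 := by omega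
  obtain ⟨b, hb3, hNeq⟩ := aux_pow_form q N hq hq2 hN0 (hω _ hodd1 hsqN) h8N hqN hq2N
  obtain ⟨c, hc3, hMeq⟩ := aux_pow_form q M hq hq2 hM0 (hω _ hodd2 hsqM) h8M hqM hq2M
  -- M = N + 8 q x
  have h8qx : 8 * q * x = 4 * q * x + 4 * q * x := by ring
  have hMN : M = N + 8 * q * x := by omega
  have hpow : 2 ^ c = 2 ^ b + 8 * x := by
    have h1 : 2 ^ c * q = (2 ^ b + 8 * x) * q := by
      rw [← hMeq, hMN, hNeq]; ring
    exact Nat.eq_of_mul_eq_mul_right (by omega) h1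
  -- force b = 3
  have hb : b = 3 := by
    by_contra hbne
    have hb4 : 4 ≤ b := by omega
    have hc4 : 4 ≤ c := by
      have h2b : (2:ℕ) ^ b < 2 ^ c := by
        have : 0 < 8 * x := by omega
        omega
      have : b < c := (Nat.pow_lt_pow_iff_right (by norm_num : 1 < 2)).mp h2b
      omega
    have h16b : (16 : ℕ) ∣ 2 ^ b := by
      have : (2:ℕ) ^ 4 ∣ 2 ^ b := pow_dvd_pow 2 hb4
      simpa using this
    have h16c : (16 : ℕ) ∣ 2 ^ c := by
      have : (2:ℕ) ^ 4 ∣ 2 ^ c := pow_dvd_pow 2 hc4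
      simpa using this
    rw [Nat.odd_iff] at hx
    omega
  -- final contradiction: N = 8 q but N > 4 q^3
  rw [hb] at hNeq
  have hNbig : 4 * q ^ 3 < N := by omega
  have : (8 : ℕ) * q < 4 * q ^ 3 := small_ineq q hq3
  omega
end

section
/- Let p be a prime with p ≡ 7 (mod 8), q an odd prime, and x an odd positive integer with x < q and 9q² < p. Suppose p + (2q − x)² = 2^b q and p + (2q + x)² = 2^c q with b, c ≥ 3. Then b = 3. -/
theorem stmt_12 (p q x b c : ℕ) (hp : p.Prime) (hmod : p % 8 = 7)
    (hq : q.Prime) (hqodd : Odd q) (hx : Odd x) (hx0 : 0 < x) (hxq : x < q)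
    (hqp : 9 * q ^ 2 < p) (hb : 3 ≤ b) (hc : 3 ≤ c)
    (heq1 : p + (2 * q - x) ^ 2 = 2 ^ b * q)
    (heq2 : p + (2 * q + x) ^ 2 = 2 ^ c * q) :
    b = 3 := by
  have hle : x ≤ 2 * q := by omega
  have hexp : (2 * q + x) ^ 2 = (2 * q - x) ^ 2 + 8 * x * q := by
    zify [hle]; ring
  have key : (2 ^ b + 8 * x) * q = 2 ^ c * q := by
    have : 2 ^ b * q + 8 * x * q = 2 ^ c * q := by linarith [heq1, heq2, hexp]
    linarith [this]
  have key2 : 2 ^ b + 8 * x = 2 ^ c :=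
    Nat.eq_of_mul_eq_mul_right hq.pos key
  by_contra hne
  have hb4 : 4 ≤ b := by omega
  have h16b : (16 : ℕ) ∣ 2 ^ b := by
    have := pow_dvd_pow 2 hb4
    norm_num at this ⊢
    exact this
  have hc5 : 5 ≤ c := by
    by_contra hc5
    have hcle : c ≤ 4 := by omega
    have h1 : 2 ^ c ≤ 2 ^ 4 := Nat.pow_le_pow_right (by norm_num) hcle
    have h2 : 2 ^ 4 ≤ 2 ^ b := Nat.pow_le_pow_right (by norm_num) hb4
    omega
  have h16c : (16 : ℕ) ∣ 2 ^ c := by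
    have := pow_dvd_pow 2 (by omega : 4 ≤ c)
    norm_num at this ⊢
    exact this
  obtain ⟨k1, hk1⟩ := h16b
  obtain ⟨k2, hk2⟩ := h16c
  obtain ⟨m, hm⟩ := hx
  omega
end

section
/- Let p ≥ 47 be prime with p ≡ 7 (mod 8) such that p + x² has at most two distinct prime factors for all odd x with x² < p. Suppose x is odd, x² < p, q is an odd prime, and p + x² = 2^a q^{2b} with a, b positive integers. Then a = 3 and b = 1, i.e., p + x² = 8q². -/
set_option maxHeartbeats 1000000

lemma aux_two_pow {N q d : ℕ} (hN : N.primeFactors.card ≤ 2) (hN0 : N ≠ 0)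
    (hq : q.Prime) (hq2 : q ≠ 2) (h2 : 2 ∣ N) (hqN : q ∣ N)
    (hd : d ∣ N) (hdq : ¬ q ∣ d) : ∃ σ, d = 2 ^ σ := by
  have hsub : ({2, q} : Finset ℕ) ⊆ N.primeFactors := by
    intro r hr
    simp only [Finset.mem_insert, Finset.mem_singleton] at hr
    rcases hr with rfl | rfl
    · exact Nat.mem_primeFactors.2 ⟨Nat.prime_two, h2, hN0⟩
    · exact Nat.mem_primeFactors.2 ⟨hq, hqN, hN0⟩
  have hcard : ({2, q} : Finset ℕ).card = 2 := by
    rw [Finset.card_insert_of_notMem (by simpa using (Ne.symm hq2)), Finset.card_singleton]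
  have heq2 : ({2, q} : Finset ℕ) = N.primeFactors :=
    Finset.eq_of_subset_of_card_le hsub (by omega)
  have hd0 : d ≠ 0 := by
    rintro rfl
    exact hN0 (Nat.eq_zero_of_zero_dvd hd)
  have key : ∀ {r : ℕ}, r.Prime → r ∣ d → r = 2 := by
    intro r hr hrd
    have hmem : r ∈ N.primeFactors := Nat.mem_primeFactors.2 ⟨hr, hrd.trans hd, hN0⟩
    rw [← heq2] at hmem
    simp only [Finset.mem_insert, Finset.mem_singleton] at hmem
    rcases hmem with rfl | rfl
    · rfl
    · exact absurd hrd hdq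
  exact ⟨_, Nat.eq_prime_pow_of_unique_prime_dvd hd0 key⟩

lemma aux_key {p x u : ℕ} (hp : 0 < p)
    (hω : ∀ z : ℕ, Odd z → z ^ 2 < p → (p + z ^ 2).primeFactors.card ≤ 2)
    (hx : Odd x) (hxp : x ^ 2 < p) (hu : Even u) (hup : u ^ 2 < p) :
    ∃ d : ℕ, 0 < d ∧ (d : ℤ) = p + x ^ 2 + u ^ 2 - 2 * u * x ∧
      d.primeFactors.card ≤ 2 := by
  set z := ((u : ℤ) - x).natAbs with hz
  have hzodd : Odd z := by
    rw [Int.natAbs_odd]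
    exact Even.sub_odd (by exact_mod_cast hu.natCast) (by exact_mod_cast hx.natCast)
  have hzsq : ((z : ℤ)) ^ 2 = ((u : ℤ) - x) ^ 2 := by
    rw [hz]; exact Int.natAbs_sq _
  have hzle : z ≤ u ∨ z ≤ x := by omega
  have hzlt : z ^ 2 < p := by
    rcases hzle with h | h
    · exact lt_of_le_of_lt (Nat.pow_le_pow_left h 2) hup
    · exact lt_of_le_of_lt (Nat.pow_le_pow_left h 2) hxp
  refine ⟨p + z ^ 2, by positivity, ?_, hω z hzodd hzlt⟩
  push_cast
  rw [hzsq]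
  ring


lemma aux_pos_factor {k d I : ℤ} (hd : 0 < d) (hk : 0 ≤ k) (h : d = k * I) : 0 < I := by
  rcases lt_or_ge 0 I with h1 | h1
  · exact h1
  · exfalso
    have h2 : 0 ≤ k * (-I) := mul_nonneg hk (by linarith)
    nlinarith

lemma aux_small {x p : ℕ} (h1 : x ^ 2 < p) (h2 : p = 2 * x + 1) : x ≤ 2 := by nlinarith

lemma aux_qp {x p : ℕ} (h5 : 2 * p ^ 2 ≤ p + x ^ 2) (hxp : x ^ 2 < p) (hp2 : 2 ≤ p) :
    False := by nlinarith

lemma aux_q2c {qZ cZ : ℤ} (hq : 3 ≤ qZ) (hc : 1 ≤ cZ) : 0 < (qZ ^ 2 - 1) * cZ := by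
  have h1 : 0 < qZ ^ 2 - 1 := by nlinarith
  exact mul_pos h1 (by linarith)

lemma aux_sigma {qZ cZ xZ i1 i2 : ℤ} (hq : 3 ≤ qZ) (hc : 1 ≤ cZ) (hx : xZ < 2 * qZ * cZ)
    (e1 : i1 = 2 * qZ ^ 2 * cZ + cZ - xZ) (e2 : i2 = qZ ^ 2 * cZ + 2 * cZ - xZ)
    (h3 : 4 * i2 ≤ i1) : False := by
  have key : (0:ℤ) ≤ (qZ - 3) * (qZ - 1) * cZ :=
    mul_nonneg (mul_nonneg (by linarith) (by linarith)) (by linarith)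
  nlinarith [key]

theorem stmt_14 (p q x a b : ℕ) (hp : p.Prime) (h47 : 47 ≤ p) (hmod : p % 8 = 7)
    (hω : ∀ z : ℕ, Odd z → z ^ 2 < p → (p + z ^ 2).primeFactors.card ≤ 2)
    (hx : Odd x) (hxp : x ^ 2 < p) (hq : q.Prime) (hqodd : Odd q)
    (ha : 0 < a) (hb : 0 < b) (heq : p + x ^ 2 = 2 ^ a * q ^ (2 * b)) :
    a = 3 ∧ b = 1 ∧ p + x ^ 2 = 8 * q ^ 2 := by
  have hp0 : 0 < p := by omega
  have hq2 : q ≠ 2 := by rintro rfl; simp [Nat.odd_iff] at hqodd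
  have hq3 : 3 ≤ q := by have := hq.two_le; omega
  have hx1 : 1 ≤ x := hx.pos
  -- q does not divide x
  have hqx : ¬ q ∣ x := by
    intro h
    have h1 : q ∣ x ^ 2 := Dvd.dvd.pow h two_ne_zero
    have h2 : q ∣ p + x ^ 2 := by
      rw [heq]; exact Dvd.dvd.mul_left (dvd_pow_self q (by omega)) _
    have h3 : q ∣ p := (Nat.dvd_add_right h1).mp (by rwa [add_comm] at h2)
    have h4 : q = p := (Nat.prime_dvd_prime_iff_eq hq hp).1 h3
    have h5 : 2 * q ^ 2 ≤ 2 ^ a * q ^ (2 * b) := by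
      have e1 : q ^ 2 ≤ q ^ (2 * b) := Nat.pow_le_pow_right (by omega) (by omega)
      have e2 : 2 ≤ 2 ^ a := Nat.one_lt_two_pow (by omega)
      exact Nat.mul_le_mul e2 e1
    rw [← heq] at h5
    subst h4
    exact aux_qp h5 hxp hq.two_le
  -- 8 divides p + x^2, hence a ≥ 3
  have h8 : 8 ∣ p + x ^ 2 := by
    have hx8 : x % 8 = 1 ∨ x % 8 = 3 ∨ x % 8 = 5 ∨ x % 8 = 7 := by
      rcases hx with ⟨t, rfl⟩; omega
    have hsq : x ^ 2 % 8 = 1 := by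
      rw [Nat.pow_mod]; rcases hx8 with h|h|h|h <;> rw [h] <;> rfl
    omega
  have ha3 : 3 ≤ a := by
    have hco : Nat.Coprime (2 ^ 3) (q ^ (2 * b)) :=
      Nat.Coprime.pow 3 (2 * b) ((Nat.coprime_primes Nat.prime_two hq).2 (Ne.symm hq2))
    have h1 : (2 : ℕ) ^ 3 ∣ 2 ^ a * q ^ (2 * b) := by rw [← heq]; exact h8
    have h2 : (2 : ℕ) ^ 3 ∣ 2 ^ a := hco.dvd_of_dvd_mul_right h1
    exact (Nat.pow_dvd_pow_iff_le_right (by norm_num)).1 h2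
  -- a cannot be even
  have haodd : Odd a := by
    rw [← Nat.not_even_iff_odd]
    rintro ⟨m, hm⟩
    set T := 2 ^ m * q ^ b with hT
    have hT2 : T ^ 2 = p + x ^ 2 := by
      rw [heq, hT, mul_pow, ← pow_mul, ← pow_mul]
      congr 1 <;> ring_nf
      · congr 1; omega
    have hxT : x < T := by
      have h0 : x ^ 2 < T ^ 2 := by rw [hT2]; omega
      exact lt_of_pow_lt_pow_left₀ 2 (Nat.zero_le T) h0
    have hfac : (T - x) * (T + x) = p := by
      have := Nat.sq_sub_sq T x
      have h1 : T ^ 2 - x ^ 2 = p := by omega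
      rw [← h1, this]; ring
    have hdvd : (T - x) ∣ p := ⟨T + x, hfac.symm⟩
    rcases (Nat.Prime.eq_one_or_self_of_dvd hp _ hdvd) with h1 | h1
    · -- T - x = 1, p = 2x + 1
      rw [h1] at hfac
      have hT1 : T = x + 1 := by omega
      have hpval : p = 2 * x + 1 := by omega
      have := aux_small hxp hpval
      omega
    · -- T - x = p forces T + x = 1
      rw [h1] at hfac
      have : p * (T + x) = p * 1 := by omega
      have := Nat.eq_of_mul_eq_mul_left hp0 this
      omega
  -- rule out a ≥ 5
  have ha35 : a = 3 := by
    by_contra hne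
    have ha5 : 5 ≤ a := by rcases haodd with ⟨m, hm⟩; omega
    set Q := q ^ b with hQ
    have hQ1 : 1 ≤ Q := Nat.one_le_pow _ _ (by omega)
    have hqQ : q ∣ Q := dvd_pow_self q (by omega)
    have heqQ : p + x ^ 2 = 2 ^ a * Q ^ 2 := by
      rw [heq, hQ, ← pow_mul]; ring_nf
    set M := 2 ^ (a - 3) with hM
    have hM4 : 4 ≤ M := by
      have : (2:ℕ) ^ 2 ≤ 2 ^ (a - 3) := Nat.pow_le_pow_right (by norm_num) (by omega)
      simpa [hM] using this
    have h2a : 2 ^ a = 8 * M := by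
      rw [hM, show a = 3 + (a - 3) by omega, pow_add]; norm_num
    have heq8 : p + x ^ 2 = 8 * (M * (Q * Q)) := by rw [heqQ, h2a]; ring
    have hMQ : 4 * (Q * Q) ≤ M * (Q * Q) := Nat.mul_le_mul_right _ hM4
    have hup : (4 * Q) ^ 2 < p := by
      have e : (4 * Q) ^ 2 = 16 * (Q * Q) := by ring
      linarith [hMQ, heq8, hxp, Nat.zero_le (Q * Q), e]
    obtain ⟨d, hd0, hdval, hdcard⟩ := aux_key hp0 hω hx hxp (⟨2 * Q, by ring⟩) hup
    set I : ℤ := M * Q + 2 * Q - x with hI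
    have hdI : (d : ℤ) = 8 * Q * I := by
      rw [hdval, hI]
      have h0 : ((p : ℤ) + x ^ 2) = 8 * M * Q ^ 2 := by
        exact_mod_cast (by rw [heq8]; ring : p + x ^ 2 = 8 * M * Q ^ 2)
      rw [h0]; push_cast; ring
    have hI0 : 0 < I :=
      aux_pos_factor (show (0:ℤ) < d by exact_mod_cast hd0) (by positivity) hdI
    set inner := I.toNat with hinner
    have hinnerI : (inner : ℤ) = I := Int.toNat_of_nonneg hI0.le
    have hdmul : d = 8 * Q * inner := by
      have : (d : ℤ) = ((8 * Q * inner : ℕ) : ℤ) := by rw [hdI]; push_cast; rw [hinnerI]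
      exact_mod_cast this
    have hinnerodd : Odd inner := by
      rw [← Int.odd_coe_nat, hinnerI, hI]
      have hMev : Even (M : ℤ) := by
        refine ⟨2 ^ (a - 4), ?_⟩
        rw [hM]; push_cast
        rw [show a - 3 = (a-4) + 1 by omega, pow_succ]; ring
      exact Even.sub_odd (by rcases hMev with ⟨k, hk⟩; exact ⟨k * Q + Q, by rw [hk]; ring⟩)
        (by exact_mod_cast hx.natCast)
    have hqinner : ¬ q ∣ inner := by
      intro h
      apply hqx
      have h1 : (q : ℤ) ∣ inner := Int.natCast_dvd_natCast.2 h
      have h2 : (q : ℤ) ∣ Q := Int.natCast_dvd_natCast.2 hqQ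
      have h3 : (q : ℤ) ∣ x := by
        have h4 : (x : ℤ) = M * Q + 2 * Q - inner := by rw [hinnerI, hI]; ring
        rw [h4]
        exact dvd_sub (dvd_add (Dvd.dvd.mul_left h2 M) (Dvd.dvd.mul_left h2 2)) h1
      exact_mod_cast h3
    obtain ⟨σ, hσ⟩ := aux_two_pow hdcard (by omega) hq hq2
      (by rw [hdmul]; exact ⟨4 * Q * inner, by ring⟩)
      (by rw [hdmul]; exact Dvd.dvd.mul_right (Dvd.dvd.mul_left hqQ 8) inner)
      (Dvd.intro_left _ hdmul.symm) hqinner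
    have hinner1 : inner = 1 := by
      rcases Nat.eq_zero_or_pos σ with h | h
      · rw [hσ, h, pow_zero]
      · exfalso
        have h2 : 2 ∣ inner := hσ ▸ dvd_pow_self 2 (by omega)
        rcases hinnerodd with ⟨k, hk⟩; omega
    have hxval : x + 1 = M * Q + 2 * Q := by
      have h5 : (x : ℤ) + 1 = M * Q + 2 * Q := by
        have h6 : (1 : ℤ) = M * Q + 2 * Q - x := by rw [← hI, ← hinnerI, hinner1]; norm_num
        linarith
      exact_mod_cast h5
    have hxge : M * Q + Q ≤ x := by
      have hMQ1 : 1 ≤ M * Q := Nat.one_le_iff_ne_zero.2 (by positivity)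
      omega
    have h1 : (M * Q + Q) ^ 2 ≤ x ^ 2 := Nat.pow_le_pow_left hxge 2
    have h1' : M * M * (Q * Q) + 2 * (M * (Q * Q)) + Q * Q ≤ x ^ 2 := by
      calc M * M * (Q * Q) + 2 * (M * (Q * Q)) + Q * Q = (M * Q + Q) ^ 2 := by ring
      _ ≤ x ^ 2 := h1
    have e2 : 4 * (M * (Q * Q)) ≤ M * M * (Q * Q) := by
      calc 4 * (M * (Q * Q)) ≤ M * (M * (Q * Q)) :=
            Nat.mul_le_mul_right _ hM4
      _ = M * M * (Q * Q) := by ring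
    linarith [h1', e2, heq8, hxp, Nat.zero_le (M * (Q * Q)), Nat.zero_le (Q * Q)]
  -- now a = 3; rule out b ≥ 2
  have hb1 : b = 1 := by
    by_contra hbne
    have hb2 : 2 ≤ b := by omega
    set c := q ^ (b - 1) with hc
    have hc1 : 1 ≤ c := Nat.one_le_pow _ _ (by omega)
    have hqc : q ∣ c := dvd_pow_self q (by omega)
    have hqb : q * c = q ^ b := by
      rw [hc, ← pow_succ']; congr 1; omega
    have heqc : p + x ^ 2 = 8 * (q * c) ^ 2 := by
      rw [heq, ha35, hqb, show 2 * b = b * 2 by ring, pow_mul]; norm_num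
    have heqc' : p + x ^ 2 = 8 * ((q * c) * (q * c)) := by rw [heqc]; ring
    have hx4 : x ^ 2 < 4 * ((q * c) * (q * c)) := by linarith [heqc', hxp]
    have hxlt : x < 2 * (q * c) := by
      have h1 : x ^ 2 < (2 * (q * c)) ^ 2 := by
        calc x ^ 2 < 4 * ((q * c) * (q * c)) := hx4
        _ = (2 * (q * c)) ^ 2 := by ring
      exact lt_of_pow_lt_pow_left₀ 2 (Nat.zero_le _) h1
    have hplarge : 4 * ((q * c) * (q * c)) < p := by linarith [heqc', hx4]
    have hc9 : 9 * (c * c) ≤ (q * c) * (q * c) := by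
      have h1 : 3 * c ≤ q * c := Nat.mul_le_mul_right c hq3
      calc 9 * (c * c) = (3 * c) * (3 * c) := by ring
      _ ≤ (q * c) * (q * c) := Nat.mul_le_mul h1 h1
    have hup1 : (2 * c) ^ 2 < p := by
      have e : (2 * c) ^ 2 = 4 * (c * c) := by ring
      linarith [hc9, hplarge, Nat.zero_le (c * c), Nat.zero_le ((q * c) * (q * c)), e]
    obtain ⟨d1, hd10, hd1val, hd1card⟩ := aux_key hp0 hω hx hxp (⟨c, by ring⟩) hup1
    set I1 : ℤ := 2 * q ^ 2 * c + c - x with hI1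
    have hd1I : (d1 : ℤ) = 4 * c * I1 := by
      rw [hd1val, hI1]
      have h0 : ((p : ℤ) + x ^ 2) = 8 * (q * c) ^ 2 := by exact_mod_cast heqc
      rw [h0]; push_cast; ring
    have hI10 : 0 < I1 :=
      aux_pos_factor (show (0:ℤ) < d1 by exact_mod_cast hd10) (by positivity) hd1I
    set in1 := I1.toNat with hin1
    have hin1I : (in1 : ℤ) = I1 := Int.toNat_of_nonneg hI10.le
    have hd1mul : d1 = 4 * c * in1 := by
      have : (d1 : ℤ) = ((4 * c * in1 : ℕ) : ℤ) := by rw [hd1I]; push_cast; rw [hin1I]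
      exact_mod_cast this
    have hqin1 : ¬ q ∣ in1 := by
      intro h
      apply hqx
      have h1 : (q : ℤ) ∣ in1 := Int.natCast_dvd_natCast.2 h
      have h2 : (q : ℤ) ∣ c := Int.natCast_dvd_natCast.2 hqc
      have h3 : (q : ℤ) ∣ x := by
        have h4 : (x : ℤ) = 2 * q ^ 2 * c + c - in1 := by rw [hin1I, hI1]; ring
        rw [h4]
        exact dvd_sub (dvd_add (Dvd.dvd.mul_left h2 _) h2) h1
      exact_mod_cast h3
    obtain ⟨σ, hσ⟩ := aux_two_pow hd1card (by omega) hq hq2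
      (by rw [hd1mul]; exact ⟨2 * c * in1, by ring⟩)
      (by rw [hd1mul]; exact Dvd.dvd.mul_right (Dvd.dvd.mul_left hqc 4) in1)
      (Dvd.intro_left _ hd1mul.symm) hqin1
    have hup2 : (4 * c) ^ 2 < p := by
      have e : (4 * c) ^ 2 = 16 * (c * c) := by ring
      linarith [hc9, hplarge, Nat.zero_le (c * c), Nat.zero_le ((q * c) * (q * c)), e]
    obtain ⟨d2, hd20, hd2val, hd2card⟩ := aux_key hp0 hω hx hxp (⟨2 * c, by ring⟩) hup2
    set I2 : ℤ := q ^ 2 * c + 2 * c - x with hI2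
    have hd2I : (d2 : ℤ) = 8 * c * I2 := by
      rw [hd2val, hI2]
      have h0 : ((p : ℤ) + x ^ 2) = 8 * (q * c) ^ 2 := by exact_mod_cast heqc
      rw [h0]; push_cast; ring
    have hI20 : 0 < I2 :=
      aux_pos_factor (show (0:ℤ) < d2 by exact_mod_cast hd20) (by positivity) hd2I
    set in2 := I2.toNat with hin2
    have hin2I : (in2 : ℤ) = I2 := Int.toNat_of_nonneg hI20.le
    have hd2mul : d2 = 8 * c * in2 := by
      have : (d2 : ℤ) = ((8 * c * in2 : ℕ) : ℤ) := by rw [hd2I]; push_cast; rw [hin2I]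
      exact_mod_cast this
    have hqin2 : ¬ q ∣ in2 := by
      intro h
      apply hqx
      have h1 : (q : ℤ) ∣ in2 := Int.natCast_dvd_natCast.2 h
      have h2 : (q : ℤ) ∣ c := Int.natCast_dvd_natCast.2 hqc
      have h3 : (q : ℤ) ∣ x := by
        have h4 : (x : ℤ) = q ^ 2 * c + 2 * c - in2 := by rw [hin2I, hI2]; ring
        rw [h4]
        exact dvd_sub (dvd_add (Dvd.dvd.mul_left h2 _) (Dvd.dvd.mul_left h2 2)) h1
      exact_mod_cast h3
    obtain ⟨τ, hτ⟩ := aux_two_pow hd2card (by omega) hq hq2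
      (by rw [hd2mul]; exact ⟨4 * c * in2, by ring⟩)
      (by rw [hd2mul]; exact Dvd.dvd.mul_right (Dvd.dvd.mul_left hqc 8) in2)
      (Dvd.intro_left _ hd2mul.symm) hqin2
    -- useful cast facts
    have hxZ : (x : ℤ) < 2 * q * c := by
      have : (x:ℤ) < ((2 * (q * c) : ℕ) : ℤ) := by exact_mod_cast hxlt
      push_cast at this; linarith
    have hcZ : (1:ℤ) ≤ c := by exact_mod_cast hc1
    have hqZ : (3:ℤ) ≤ q := by exact_mod_cast hq3
    have e1 : (in1 : ℤ) = 2 * q ^ 2 * c + c - x := by rw [hin1I, hI1]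
    have e2 : (in2 : ℤ) = q ^ 2 * c + 2 * c - x := by rw [hin2I, hI2]
    -- in2 < in1
    have hin2lt : in2 < in1 := by
      have h0 : (in2 : ℤ) < in1 := by
        have hk : (0:ℤ) < ((q:ℤ)^2 - 1) * c := aux_q2c hqZ hcZ
        have : (in1 : ℤ) - in2 = (q^2 - 1) * c := by rw [e1, e2]; ring
        linarith
      exact_mod_cast h0
    have hτσ : τ < σ := by
      have h0 := hσ ▸ hτ ▸ hin2lt
      exact (pow_lt_pow_iff_right₀ (by norm_num : (1:ℕ) < 2)).1 h0
    have hστ : σ = τ + 1 := by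
      by_contra hc2
      have h2 : τ + 2 ≤ σ := by omega
      have h3 : 4 * in2 ≤ in1 := by
        rw [hσ, hτ]
        calc 4 * 2 ^ τ = 2 ^ (τ + 2) := by ring
        _ ≤ 2 ^ σ := Nat.pow_le_pow_right (by norm_num) h2
      have h3Z : 4 * (in2 : ℤ) ≤ (in1 : ℤ) := by exact_mod_cast h3
      exact aux_sigma hqZ hcZ hxZ e1 e2 h3Z
    -- 2^τ = (q^2 - 1) * c, but q ∣ c
    have hdiffN : in1 = in2 + (q ^ 2 - 1) * c := by
      have h9 : 1 ≤ q ^ 2 := Nat.one_le_pow _ _ (by omega)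
      have h0 : ((in2 + (q ^ 2 - 1) * c : ℕ) : ℤ) = in1 := by
        push_cast [Nat.cast_sub h9]
        rw [e1, e2]; ring
      exact_mod_cast h0.symm
    have hfin : 2 ^ τ = (q ^ 2 - 1) * c := by
      have h0 : (2:ℕ) ^ σ = 2 ^ τ + (q ^ 2 - 1) * c := by rw [← hσ, ← hτ]; exact hdiffN
      rw [hστ, pow_succ] at h0
      generalize (2:ℕ) ^ τ = t at h0 ⊢
      omega
    have h1 : q ∣ 2 ^ τ := hfin ▸ Dvd.dvd.mul_left hqc _
    have h2 := hq.dvd_of_dvd_pow h1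
    have h3 := Nat.le_of_dvd (by norm_num) h2
    omega
  refine ⟨ha35, hb1, ?_⟩
  rw [heq, ha35, hb1]
  norm_num
end

section
/- Let p be a prime with p ≡ 5 (mod 8), p > 64, such that for every odd positive integer x with x² < p, p + x² = 2qᵃ for some prime q and positive integer a. Then a ≤ 2 always holds. -/
/-- From `q ∣ p + x²` with `q ∤ x`, `q` an odd prime, produce an odd `y` with
`0 < y < q` and `q ∣ p + y²`. -/
lemma find_odd_res (q p x : ℕ) (hq : q.Prime) (hqodd : q % 2 = 1)
    (hd : q ∣ p + x ^ 2) (hnd : ¬ q ∣ x) :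
    ∃ y, Odd y ∧ 0 < y ∧ y < q ∧ q ∣ p + y ^ 2 := by
  have hq0 : 0 < q := hq.pos
  set r := x % q with hr
  have hrq : r < q := Nat.mod_lt _ hq0
  have hr0 : 0 < r := by
    rcases Nat.eq_zero_or_pos r with h | h
    · exact absurd (Nat.dvd_of_mod_eq_zero h) hnd
    · exact h
  have hdr : q ∣ p + r ^ 2 := by
    have h1 : p + r ^ 2 ≡ p + x ^ 2 [MOD q] :=
      Nat.ModEq.add_left p ((Nat.mod_modEq x q).pow 2)
    have h2 : p + x ^ 2 ≡ 0 [MOD q] := (Nat.modEq_zero_iff_dvd).mpr hd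
    exact (Nat.modEq_zero_iff_dvd).mp (h1.trans h2)
  rcases Nat.even_or_odd r with he | ho
  · -- r even, use q - r
    refine ⟨q - r, ?_, by omega, by omega, ?_⟩
    · have := he.two_dvd
      rw [Nat.odd_iff]
      omega
    · have hZ : (q : ℤ) ∣ (p : ℤ) + ((q : ℤ) - r) ^ 2 := by
        have heq : (p : ℤ) + ((q : ℤ) - r) ^ 2
            = ((p + r ^ 2 : ℕ) : ℤ) + (q : ℤ) * ((q : ℤ) - 2 * r) := by
          push_cast; ring
        rw [heq]
        exact dvd_add (Int.natCast_dvd_natCast.mpr hdr) ⟨(q : ℤ) - 2 * r, rfl⟩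
      have hcast : ((q - r : ℕ) : ℤ) = (q : ℤ) - r := by
        push_cast [Nat.cast_sub hrq.le]; ring
      rw [← Int.natCast_dvd_natCast]
      push_cast [hcast]
      exact_mod_cast hZ
  · exact ⟨r, ho, hr0, hrq, hdr⟩

/-- If `q ∣ 2 * q'^b` with `q` an odd prime and `q'` prime, `0 < b`, then `q' = q`. -/
lemma same_prime {q q' b : ℕ} (hq : q.Prime) (hq' : q'.Prime) (hq2 : q ≠ 2)
    (_hb : 0 < b) (hd : q ∣ 2 * q' ^ b) : q' = q := by
  rcases (Nat.Prime.dvd_mul hq).mp hd with h | h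
  · have := (Nat.prime_dvd_prime_iff_eq hq Nat.prime_two).mp h
    exact absurd this hq2
  · have := hq.dvd_of_dvd_pow h
    exact ((Nat.prime_dvd_prime_iff_eq hq hq').mp this).symm

theorem stmt_19 (p : ℕ) (hp : p.Prime) (hmod : p % 8 = 5) (h64 : 64 < p)
    (hform : ∀ x : ℕ, Odd x → 0 < x → x ^ 2 < p →
      ∃ q a : ℕ, q.Prime ∧ 0 < a ∧ p + x ^ 2 = 2 * q ^ a) :
    ∀ x q a : ℕ, Odd x → 0 < x → x ^ 2 < p → q.Prime → 0 < a →
      p + x ^ 2 = 2 * q ^ a → a ≤ 2 := by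
  intro x q a hx hxpos hx2 hq ha heq
  by_contra hcon
  push_neg at hcon
  have ha3 : 3 ≤ a := hcon
  have hq2le : 2 ≤ q := hq.two_le
  -- x² ≡ 1 (mod 8)
  have hx8 : x ^ 2 % 8 = 1 := by
    obtain ⟨k, hk⟩ := hx
    have h2 : 2 ∣ k * (k + 1) := (Nat.even_mul_succ_self k).two_dvd
    have : x ^ 2 = 4 * (k * (k + 1)) + 1 := by subst hk; ring
    omega
  have hsum8 : (p + x ^ 2) % 8 = 6 := by omega
  -- q ≠ 2
  have hq2 : q ≠ 2 := by
    intro h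
    subst h
    have h8 : (8 : ℕ) ∣ 2 * 2 ^ a := by
      have : (2 : ℕ) ^ 3 ∣ 2 ^ a := pow_dvd_pow 2 ha3
      calc (8 : ℕ) = 2 ^ 3 := by norm_num
        _ ∣ 2 ^ a := this
        _ ∣ 2 * 2 ^ a := dvd_mul_left _ 2
    rw [← heq] at h8
    omega
  have hqodd : q % 2 = 1 := by
    rcases Nat.even_or_odd q with he | ho
    · exact absurd ((Nat.Prime.even_iff hq).mp he) hq2
    · exact Nat.odd_iff.mp ho
  -- q^a < p, so q^3 < p
  have hqa : q ^ a < p := by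
    have h1 : 2 * q ^ a < 2 * p := by omega
    omega
  have hq3p : q ^ 3 < p := lt_of_le_of_lt (Nat.pow_le_pow_right (by omega) ha3) hqa
  have hqselfp : q ≤ q ^ 3 := Nat.le_self_pow (by norm_num) q
  -- q ∤ x
  have hqx : ¬ q ∣ x := by
    intro hdx
    have h2 : q ∣ x ^ 2 := dvd_pow hdx (by norm_num)
    have h1 : q ∣ 2 * q ^ a := Dvd.dvd.mul_left (dvd_pow_self q (by omega)) 2
    have hqp : q ∣ p := by
      have h3 : q ∣ p + x ^ 2 := heq ▸ h1
      have h4 := Nat.dvd_sub h3 h2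
      rwa [Nat.add_sub_cancel] at h4
    have heqp : q = p := (Nat.prime_dvd_prime_iff_eq hq hp).mp hqp
    omega
  -- q ∣ p + x²
  have hdpx : q ∣ p + x ^ 2 :=
    heq ▸ (Dvd.dvd.mul_left (dvd_pow_self q (by omega)) 2)
  obtain ⟨y, hyodd, hy0, hyq, hdy⟩ := find_odd_res q p x hq hqodd hdpx hqx
  -- y² < p
  have hy2p : y ^ 2 < p := by
    have h1 : y ^ 2 < q ^ 2 := Nat.pow_lt_pow_left hyq (by norm_num)
    have h2 : q ^ 2 ≤ q ^ 3 := Nat.pow_le_pow_right (by omega) (by norm_num)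
    omega
  obtain ⟨q1, b, hq1, hb, heqy⟩ := hform y hyodd hy0 hy2p
  have hq1q : q1 = q := same_prime hq hq1 hq2 hb (heqy ▸ hdy)
  rw [hq1q] at heqy
  -- z := 2q - y
  set z := 2 * q - y with hzdef
  have hyz : y + z = 2 * q := by omega
  have hzodd : Odd z := by
    rw [Nat.odd_iff] at *
    omega
  have hz0 : 0 < z := by omega
  have h4q2 : 4 * q ^ 2 < p := by
    rcases le_or_gt 4 q with h | h
    · have h1 : 4 * q ^ 2 ≤ q * q ^ 2 := Nat.mul_le_mul_right _ h
      have h2 : q * q ^ 2 = q ^ 3 := by ring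
      omega
    · interval_cases q <;> omega
  have hz2p : z ^ 2 < p := by
    have h1 : z < 2 * q := by omega
    have h2 : z ^ 2 < (2 * q) ^ 2 := Nat.pow_lt_pow_left h1 (by norm_num)
    have h3 : (2 * q) ^ 2 = 4 * q ^ 2 := by ring
    omega
  have hdz : q ∣ p + z ^ 2 := by
    have hZ : (q : ℤ) ∣ (p : ℤ) + (z : ℤ) ^ 2 := by
      have hcast : (z : ℤ) = 2 * q - y := by omega
      have heq2 : (p : ℤ) + (z : ℤ) ^ 2
          = ((p + y ^ 2 : ℕ) : ℤ) + (q : ℤ) * (4 * q - 4 * y) := by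
        rw [hcast]; push_cast; ring
      rw [heq2]
      exact dvd_add (Int.natCast_dvd_natCast.mpr hdy) ⟨4 * (q : ℤ) - 4 * y, rfl⟩
    exact_mod_cast hZ
  obtain ⟨q2, c, hq2', hc, heqz⟩ := hform z hzodd hz0 hz2p
  have hq2q : q2 = q := same_prime hq hq2' hq2 hc (heqz ▸ hdz)
  rw [hq2q] at heqz
  -- b < c
  have hylz : y < z := by omega
  have hbc : b < c := by
    have hy2z2 : y ^ 2 < z ^ 2 := Nat.pow_lt_pow_left hylz (by norm_num)
    have h1 : q ^ b < q ^ c := by linarith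
    exact (Nat.pow_lt_pow_iff_right (by omega)).mp h1
  -- key equation: 2q^c + 4qy = 2q^b + 4q²
  have hkey : 2 * q ^ c + 4 * q * y = 2 * q ^ b + 4 * q ^ 2 := by
    have e1 : (p : ℤ) + (y : ℤ) ^ 2 = 2 * (q : ℤ) ^ b := by exact_mod_cast heqy
    have e2 : (p : ℤ) + (z : ℤ) ^ 2 = 2 * (q : ℤ) ^ c := by exact_mod_cast heqz
    have hcast : (z : ℤ) = 2 * q - y := by omega
    rw [hcast] at e2
    have hZ : 2 * (q : ℤ) ^ c + 4 * q * y = 2 * (q : ℤ) ^ b + 4 * q ^ 2 := by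
      linear_combination e1 - e2
    exact_mod_cast hZ
  -- b = 1
  have hb1 : b = 1 := by
    by_contra hb2
    have hb2' : 2 ≤ b := by omega
    have d1 : q ^ 2 ∣ q ^ b := pow_dvd_pow q hb2'
    have d2 : q ^ 2 ∣ q ^ c := pow_dvd_pow q (by omega)
    have d3 : q ^ 2 ∣ 4 * q * y := by
      have h1 : q ^ 2 ∣ 2 * q ^ b + 4 * q ^ 2 :=
        dvd_add (Dvd.dvd.mul_left d1 2) (Dvd.dvd.mul_left dvd_rfl 4)
      have h2 : q ^ 2 ∣ 2 * q ^ c := Dvd.dvd.mul_left d2 2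
      have h3 : 4 * q * y = 2 * q ^ b + 4 * q ^ 2 - 2 * q ^ c := by
        rw [← hkey, Nat.add_sub_cancel_left]
      rw [h3]
      exact Nat.dvd_sub h1 h2
    have d4 : q ∣ 4 * y := by
      have h5 : q * q ∣ q * (4 * y) := by
        have h1 : q ^ 2 = q * q := by ring
        have h2 : 4 * q * y = q * (4 * y) := by ring
        rw [h1, h2] at d3
        exact d3
      exact (mul_dvd_mul_iff_left (by omega : q ≠ 0)).mp h5
    rcases (Nat.Prime.dvd_mul hq).mp d4 with h | h
    · have h4 : q ∣ 2 ^ 2 := by norm_num at h ⊢; exact h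
      have h5 := hq.dvd_of_dvd_pow h4
      exact hq2 ((Nat.prime_dvd_prime_iff_eq hq Nat.prime_two).mp h5)
    · have := Nat.le_of_dvd hy0 h
      omega
  -- contradiction: p + y² = 2q, but q³ < p
  rw [hb1, pow_one] at heqy
  have hp2q : p < 2 * q := by omega
  have e : q * q * q = q ^ 3 := by ring
  have h1 : 2 * 2 * q ≤ q * q * q :=
    Nat.mul_le_mul (Nat.mul_le_mul hq2le hq2le) le_rfl
  linarith
end
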